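/- Let [α, β] be a nondegenerate interval (α < β) and let α⁽⁰⁾, α⁽¹⁾, α⁽²⁾, β⁽⁰⁾, β⁽¹⁾, β⁽²⁾ be positive real numbers satisfying 0 < α⁽⁰⁾ < β⁽⁰⁾, 0 < α⁽¹⁾ < β⁽¹⁾, and α⁽¹⁾·(β − α) < β⁽⁰⁾ − α⁽⁰⁾ < β⁽¹⁾·(β − α). Then there exists a twice continuously differentiable function σ : [α, β] → [α⁽⁰⁾, β⁽⁰⁾] such that σ(α) = α⁽⁰⁾, σ′(α) = α⁽¹⁾, σ″(α) = α⁽²⁾, σ(β) = β⁽⁰⁾, σ′(β) = β⁽¹⁾, σ″(β) = β⁽²⁾, and σ″(x) > 0 for all x ∈ (α, β). -/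

import Mathlib

open Real Set

private lemma hasDerivAt_one_sub_pow (m : ℕ) (x : ℝ) :
    HasDerivAt (fun u : ℝ => (1 - u) ^ m) (-(m * (1 - x) ^ (m - 1))) x := by
  have h : HasDerivAt (fun u : ℝ => 1 - u) (-1) x := (hasDerivAt_id x).const_sub 1
  simpa [mul_comm, mul_neg] using h.fun_pow m

noncomputable def ff0 (n : ℕ) (a0 A1 A2 B2 Cc Dc : ℝ) : ℝ → ℝ := fun u =>
  a0 + A1 * u
  + (A2 / (((n:ℝ)+1) * ((n:ℝ)+2))) * ((1-u)^(n+2) - 1 + ((n:ℝ)+2) * u)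
  + (B2 / (((n:ℝ)+1) * ((n:ℝ)+2))) * u^(n+2)
  + Cc * (((1-u)^(n+2) - 1 + ((n:ℝ)+2)*u) / (((n:ℝ)+1)*((n:ℝ)+2))
          - ((1-u)^(n+3) - 1 + ((n:ℝ)+3)*u) / (((n:ℝ)+2)*((n:ℝ)+3)))
  + Dc * (u^(n+2) / (((n:ℝ)+1)*((n:ℝ)+2)) - u^(n+3) / (((n:ℝ)+2)*((n:ℝ)+3)))

noncomputable def ff1 (n : ℕ) (A1 A2 B2 Cc Dc : ℝ) : ℝ → ℝ := fun u =>
  A1 + (A2 / ((n:ℝ)+1)) * (1 - (1-u)^(n+1))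
  + (B2 / ((n:ℝ)+1)) * u^(n+1)
  + Cc * ((1 - (1-u)^(n+1)) / ((n:ℝ)+1) - (1 - (1-u)^(n+2)) / ((n:ℝ)+2))
  + Dc * (u^(n+1) / ((n:ℝ)+1) - u^(n+2) / ((n:ℝ)+2))

noncomputable def ff2 (n : ℕ) (A2 B2 Cc Dc : ℝ) : ℝ → ℝ := fun u =>
  A2 * (1-u)^n + B2 * u^n + Cc * ((1-u)^n - (1-u)^(n+1)) + Dc * (u^n - u^(n+1))

private lemma hasDerivAt_ff0 (n : ℕ) (a0 A1 A2 B2 Cc Dc : ℝ) (x : ℝ) :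
    HasDerivAt (ff0 n a0 A1 A2 B2 Cc Dc) (ff1 n A1 A2 B2 Cc Dc x) x := by
  have h1 : ((n:ℝ)+1) ≠ 0 := by positivity
  have h2 : ((n:ℝ)+2) ≠ 0 := by positivity
  have h3 : ((n:ℝ)+3) ≠ 0 := by positivity
  have hq2 := (hasDerivAt_one_sub_pow (n+2) x)
  have hq3 := (hasDerivAt_one_sub_pow (n+3) x)
  have hA : HasDerivAt (fun u : ℝ => (1-u)^(n+2) - 1 + ((n:ℝ)+2)*u)
      (-(((n:ℝ)+2) * (1-x)^(n+1)) + ((n:ℝ)+2)) x := by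
    have := (hq2.sub_const 1).fun_add ((hasDerivAt_id x).const_mul ((n:ℝ)+2))
    simpa [Nat.add_sub_cancel] using this
  have hB : HasDerivAt (fun u : ℝ => (1-u)^(n+3) - 1 + ((n:ℝ)+3)*u)
      (-(((n:ℝ)+3) * (1-x)^(n+2)) + ((n:ℝ)+3)) x := by
    have := (hq3.sub_const 1).fun_add ((hasDerivAt_id x).const_mul ((n:ℝ)+3))
    simpa [Nat.add_sub_cancel] using this
  have hp2 : HasDerivAt (fun u : ℝ => u^(n+2)) (((n:ℝ)+2) * x^(n+1)) x := by
    simpa using (hasDerivAt_pow (n+2) x)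
  have hp3 : HasDerivAt (fun u : ℝ => u^(n+3)) (((n:ℝ)+3) * x^(n+2)) x := by
    simpa using (hasDerivAt_pow (n+3) x)
  have h := (hasDerivAt_const x a0).add ((hasDerivAt_id x).const_mul A1)
    |>.add (hA.const_mul (A2 / (((n:ℝ)+1) * ((n:ℝ)+2))))
    |>.add (hp2.const_mul (B2 / (((n:ℝ)+1) * ((n:ℝ)+2))))
    |>.add (((hA.div_const (((n:ℝ)+1)*((n:ℝ)+2))).sub (hB.div_const (((n:ℝ)+2)*((n:ℝ)+3)))).const_mul Cc)
    |>.add (((hp2.div_const (((n:ℝ)+1)*((n:ℝ)+2))).sub (hp3.div_const (((n:ℝ)+2)*((n:ℝ)+3)))).const_mul Dc)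
  convert h using 1
  · rfl
  · rfl
  · rfl
  unfold ff1
  field_simp
  ring

private lemma hasDerivAt_ff1 (n : ℕ) (A1 A2 B2 Cc Dc : ℝ) (x : ℝ) :
    HasDerivAt (ff1 n A1 A2 B2 Cc Dc) (ff2 n A2 B2 Cc Dc x) x := by
  have h1 : ((n:ℝ)+1) ≠ 0 := by positivity
  have h2 : ((n:ℝ)+2) ≠ 0 := by positivity
  have hq1 : HasDerivAt (fun u : ℝ => 1 - (1-u)^(n+1)) (((n:ℝ)+1) * (1-x)^n) x := by
    have := (hasDerivAt_one_sub_pow (n+1) x).const_sub 1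
    simpa [Nat.add_sub_cancel] using this
  have hq2 : HasDerivAt (fun u : ℝ => 1 - (1-u)^(n+2)) (((n:ℝ)+2) * (1-x)^(n+1)) x := by
    have := (hasDerivAt_one_sub_pow (n+2) x).const_sub 1
    simpa [Nat.add_sub_cancel] using this
  have hp1 : HasDerivAt (fun u : ℝ => u^(n+1)) (((n:ℝ)+1) * x^n) x := by
    simpa using (hasDerivAt_pow (n+1) x)
  have hp2 : HasDerivAt (fun u : ℝ => u^(n+2)) (((n:ℝ)+2) * x^(n+1)) x := by
    simpa using (hasDerivAt_pow (n+2) x)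
  have h := (hasDerivAt_const x A1).add (hq1.const_mul (A2 / ((n:ℝ)+1)))
    |>.add (hp1.const_mul (B2 / ((n:ℝ)+1)))
    |>.add (((hq1.div_const ((n:ℝ)+1)).sub (hq2.div_const ((n:ℝ)+2))).const_mul Cc)
    |>.add (((hp1.div_const ((n:ℝ)+1)).sub (hp2.div_const ((n:ℝ)+2))).const_mul Dc)
  convert h using 1
  · rfl
  · rfl
  · rfl
  unfold ff2
  field_simp
  ring

private lemma ff0_eval0 (n : ℕ) (a0 A1 A2 B2 Cc Dc : ℝ) :
    ff0 n a0 A1 A2 B2 Cc Dc 0 = a0 := by simp [ff0, zero_pow]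

private lemma ff0_eval1 (n : ℕ) (a0 A1 A2 B2 Cc Dc : ℝ) :
    ff0 n a0 A1 A2 B2 Cc Dc 1 =
      a0 + A1 + A2/((n:ℝ)+2) + B2/(((n:ℝ)+1)*((n:ℝ)+2))
        + Cc/(((n:ℝ)+2)*((n:ℝ)+3)) + 2*Dc/(((n:ℝ)+1)*((n:ℝ)+2)*((n:ℝ)+3)) := by
  have h1 : ((n:ℝ)+1) ≠ 0 := by positivity
  have h2 : ((n:ℝ)+2) ≠ 0 := by positivity
  have h3 : ((n:ℝ)+3) ≠ 0 := by positivity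
  simp [ff0, zero_pow]
  field_simp
  ring

private lemma ff1_eval0 (n : ℕ) (A1 A2 B2 Cc Dc : ℝ) :
    ff1 n A1 A2 B2 Cc Dc 0 = A1 := by
  simp [ff1, zero_pow]

private lemma ff1_eval1 (n : ℕ) (A1 A2 B2 Cc Dc : ℝ) :
    ff1 n A1 A2 B2 Cc Dc 1 =
      A1 + (A2+B2)/((n:ℝ)+1) + (Cc+Dc)/(((n:ℝ)+1)*((n:ℝ)+2)) := by
  have h1 : ((n:ℝ)+1) ≠ 0 := by positivity
  have h2 : ((n:ℝ)+2) ≠ 0 := by positivity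
  simp [ff1, zero_pow]
  field_simp
  ring

private lemma ff2_eval0 (n : ℕ) (hn : n ≠ 0) (A2 B2 Cc Dc : ℝ) :
    ff2 n A2 B2 Cc Dc 0 = A2 := by simp [ff2, zero_pow, hn]

private lemma ff2_eval1 (n : ℕ) (hn : n ≠ 0) (A2 B2 Cc Dc : ℝ) :
    ff2 n A2 B2 Cc Dc 1 = B2 := by simp [ff2, zero_pow, hn]

private lemma ff2_factor (n : ℕ) (A2 B2 Cc Dc t : ℝ) :
    ff2 n A2 B2 Cc Dc t = (1-t)^n * (A2 + Cc*t) + t^n * (B2 + Dc*(1-t)) := by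
  unfold ff2; ring

private lemma ff2_pos (n : ℕ) (A2 B2 Cc Dc : ℝ)
    (hA2 : 0 < A2) (hB2 : 0 < B2) (hC : 0 ≤ Cc) (hD : 0 ≤ Dc)
    (t : ℝ) (ht0 : 0 < t) (ht1 : t < 1) : 0 < ff2 n A2 B2 Cc Dc t := by
  rw [ff2_factor]
  have h1 : (0:ℝ) < 1 - t := by linarith
  have hterm1 : 0 < (1-t)^n * (A2 + Cc*t) := by
    have := mul_nonneg hC ht0.le
    positivity
  have hterm2 : 0 ≤ t^n * (B2 + Dc*(1-t)) := by
    have := mul_nonneg hD h1.le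
    positivity
  linarith

private lemma key_pow_bound (n : ℕ) (s : ℝ) (h0 : 0 ≤ s) (h1 : s ≤ 1) :
    s^(n+1) * (1 + ((n:ℝ)+1)*(1-s)) ≤ 1 := by
  have hb : 1 + ((n:ℝ)+1)*(1-s) ≤ (1+(1-s))^(n+1) := by
    have := one_add_mul_le_pow (a := 1 - s) (by linarith) (n+1)
    simpa [mul_comm] using this
  have hs : (0:ℝ) ≤ s^(n+1) := by positivity
  calc s^(n+1) * (1 + ((n:ℝ)+1)*(1-s)) ≤ s^(n+1) * (1+(1-s))^(n+1) :=
        mul_le_mul_of_nonneg_left hb hs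
    _ = (s*(2-s))^(n+1) := by rw [← mul_pow]; ring_nf
    _ ≤ 1 := by
        apply pow_le_one₀ (by nlinarith) (by nlinarith)

private lemma ff1_lower (n : ℕ) (A1 A2 B2 Cc Dc : ℝ)
    (hA2 : 0 ≤ A2) (hB2 : 0 ≤ B2) (hC : 0 ≤ Cc) (hD : 0 ≤ Dc)
    (t : ℝ) (ht0 : 0 ≤ t) (ht1 : t ≤ 1) :
    A1 ≤ ff1 n A1 A2 B2 Cc Dc t := by
  have h1 : (0:ℝ) < (n:ℝ)+1 := by positivity
  have h2 : (0:ℝ) < (n:ℝ)+2 := by positivity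
  have hs0 : (0:ℝ) ≤ 1 - t := by linarith
  have hs1 : 1 - t ≤ 1 := by linarith
  have hT1 : 0 ≤ (A2 / ((n:ℝ)+1)) * (1 - (1-t)^(n+1)) := by
    have := pow_le_one₀ hs0 hs1 (n := n+1)
    have : (0:ℝ) ≤ 1 - (1-t)^(n+1) := by linarith
    positivity
  have hT2 : 0 ≤ (B2 / ((n:ℝ)+1)) * t^(n+1) := by positivity
  have hbr : 0 ≤ (1 - (1-t)^(n+1)) / ((n:ℝ)+1) - (1 - (1-t)^(n+2)) / ((n:ℝ)+2) := by
    have key := key_pow_bound n (1-t) hs0 hs1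
    have heq : (1 - (1-t)^(n+1)) / ((n:ℝ)+1) - (1 - (1-t)^(n+2)) / ((n:ℝ)+2)
        = (1 - (1-t)^(n+1) * (1 + ((n:ℝ)+1)*(1-(1-t)))) / (((n:ℝ)+1)*((n:ℝ)+2)) := by
      field_simp
      ring
    rw [heq]
    apply div_nonneg _ (by positivity)
    nlinarith [key]
  have hbr2 : 0 ≤ t^(n+1) / ((n:ℝ)+1) - t^(n+2) / ((n:ℝ)+2) := by
    have heq : t^(n+1) / ((n:ℝ)+1) - t^(n+2) / ((n:ℝ)+2)
        = t^(n+1) * (((n:ℝ)+2) - ((n:ℝ)+1)*t) / (((n:ℝ)+1)*((n:ℝ)+2)) := by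
      field_simp
      ring
    rw [heq]
    apply div_nonneg _ (by positivity)
    have ht : (0:ℝ) ≤ t^(n+1) := by positivity
    exact mul_nonneg ht (by nlinarith [mul_le_mul_of_nonneg_left ht1 h1.le])
  have hT3 : 0 ≤ Cc * ((1 - (1-t)^(n+1)) / ((n:ℝ)+1) - (1 - (1-t)^(n+2)) / ((n:ℝ)+2)) :=
    mul_nonneg hC hbr
  have hT4 : 0 ≤ Dc * (t^(n+1) / ((n:ℝ)+1) - t^(n+2) / ((n:ℝ)+2)) := mul_nonneg hD hbr2
  unfold ff1
  linarith

private lemma aux_k2 (n : ℕ) (S : ℝ) (hn2 : (2:ℝ) < (n:ℝ))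
    (hqpos : 0 ≤ S/((n:ℝ)+1)) (hqS : ((n:ℝ)+1) * (S/((n:ℝ)+1)) = S) :
    ((n:ℝ)+3)*(S/((n:ℝ)+1)) ≤ 2*S := by
  nlinarith [mul_nonneg (by linarith : (0:ℝ) ≤ (n:ℝ)-1) hqpos, hqS]

set_option maxHeartbeats 3200000 in
theorem c2_interpolation_with_positive_second_derivative
    (α β a0 a1 a2 b0 b1 b2 : ℝ) (hαβ : α < β)
    (ha0 : 0 < a0) (ha1 : 0 < a1) (ha2 : 0 < a2)
    (hb0 : 0 < b0) (hb1 : 0 < b1) (hb2 : 0 < b2)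
    (h00 : a0 < b0) (h11 : a1 < b1)
    (hlow : a1 * (β - α) < b0 - a0) (hhigh : b0 - a0 < b1 * (β - α)) :
    ∃ (s : Set ℝ) (σ : ℝ → ℝ), IsOpen s ∧ Set.Icc α β ⊆ s ∧
      ContDiffOn ℝ 2 σ s ∧
      (∀ x ∈ Set.Icc α β, σ x ∈ Set.Icc a0 b0) ∧
      σ α = a0 ∧ deriv σ α = a1 ∧ deriv (deriv σ) α = a2 ∧
      σ β = b0 ∧ deriv σ β = b1 ∧ deriv (deriv σ) β = b2 ∧
      ∀ x ∈ Set.Ioo α β, 0 < deriv (deriv σ) x := by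
  obtain ⟨L, hLdef⟩ : ∃ x : ℝ, x = β - α := ⟨_, rfl⟩
  have hL : (0:ℝ) < L := by rw [hLdef]; linarith
  have hLne : L ≠ 0 := ne_of_gt hL
  rw [← hLdef] at hlow hhigh
  obtain ⟨A1, hA1⟩ : ∃ x : ℝ, x = a1 * L := ⟨_, rfl⟩
  obtain ⟨A2, hA2⟩ : ∃ x : ℝ, x = a2 * L^2 := ⟨_, rfl⟩
  obtain ⟨B2, hB2⟩ : ∃ x : ℝ, x = b2 * L^2 := ⟨_, rfl⟩
  have hA1pos : 0 < A1 := by rw [hA1]; positivity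
  have hA2pos : 0 < A2 := by rw [hA2]; positivity
  have hB2pos : 0 < B2 := by rw [hB2]; positivity
  obtain ⟨S, hS⟩ : ∃ x : ℝ, x = A2 + B2 := ⟨_, rfl⟩
  have hSpos : 0 < S := by rw [hS]; positivity
  obtain ⟨I, hIdef⟩ : ∃ x : ℝ, x = (b1 - a1) * L := ⟨_, rfl⟩
  obtain ⟨J, hJdef⟩ : ∃ x : ℝ, x = b0 - a0 - A1 := ⟨_, rfl⟩
  have hIpos : 0 < I := by rw [hIdef]; apply mul_pos _ hL; linarith
  have hJpos : 0 < J := by rw [hJdef, hA1]; linarith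
  have hKpos : 0 < I - J := by
    have : I - J = b1 * L - (b0 - a0) := by rw [hIdef, hJdef, hA1]; ring
    rw [this]; linarith
  obtain ⟨n, hn⟩ := exists_nat_gt ((2*I + 2*S)/J + (S + 2*J)/(I-J) + 2)
  have hfrac1 : 0 ≤ (2*I + 2*S)/J := by positivity
  have hfrac2 : 0 ≤ (S + 2*J)/(I-J) := by positivity
  have hn2 : (2:ℝ) < (n:ℝ) := by linarith
  have hnm : (0:ℝ) < (n:ℝ) - 1 := by linarith
  have hn0 : n ≠ 0 := by
    have : 2 < n := by exact_mod_cast hn2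
    omega
  have h1p : (0:ℝ) < (n:ℝ)+1 := by positivity
  have h2p : (0:ℝ) < (n:ℝ)+2 := by positivity
  have h3p : (0:ℝ) < (n:ℝ)+3 := by positivity
  have h1ne : ((n:ℝ)+1) ≠ 0 := ne_of_gt h1p
  have h2ne : ((n:ℝ)+2) ≠ 0 := ne_of_gt h2p
  have h3ne : ((n:ℝ)+3) ≠ 0 := ne_of_gt h3p
  have hnmne : ((n:ℝ)-1) ≠ 0 := ne_of_gt hnm
  have hnJ : 2*I + 2*S ≤ (n:ℝ)*J := by
    have h := le_trans (by linarith : (2*I + 2*S)/J ≤ (n:ℝ)) (le_refl _)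
    calc 2*I + 2*S = ((2*I + 2*S)/J) * J := by field_simp
      _ ≤ (n:ℝ) * J := by apply mul_le_mul_of_nonneg_right h hJpos.le
  have hnK : S + 2*J ≤ (n:ℝ)*(I-J) := by
    have h : (S + 2*J)/(I-J) ≤ (n:ℝ) := by linarith
    calc S + 2*J = ((S + 2*J)/(I-J)) * (I-J) := by field_simp
      _ ≤ (n:ℝ) * (I-J) := by apply mul_le_mul_of_nonneg_right h hKpos.le
  obtain ⟨I', hI'def⟩ : ∃ x : ℝ, x = I - S/((n:ℝ)+1) := ⟨_, rfl⟩
  obtain ⟨J', hJ'def⟩ : ∃ x : ℝ, x = J - A2/((n:ℝ)+2) - B2/(((n:ℝ)+1)*((n:ℝ)+2)) := ⟨_, rfl⟩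
  have hqpos : 0 ≤ S/((n:ℝ)+1) := by positivity
  have hqS : ((n:ℝ)+1) * (S/((n:ℝ)+1)) = S := mul_div_cancel₀ S h1ne
  have hJ'le : J' ≤ J := by
    have e1 : 0 ≤ A2/((n:ℝ)+2) := by positivity
    have e2 : 0 ≤ B2/(((n:ℝ)+1)*((n:ℝ)+2)) := by positivity
    rw [hJ'def]; linarith
  have hJ'ge : J - S/((n:ℝ)+1) ≤ J' := by
    have e1 : A2/((n:ℝ)+2) ≤ A2/((n:ℝ)+1) := by
      apply div_le_div_of_nonneg_left hA2pos.le h1p (by linarith)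
    have e2 : B2/(((n:ℝ)+1)*((n:ℝ)+2)) ≤ B2/((n:ℝ)+1) := by
      apply div_le_div_of_nonneg_left hB2pos.le h1p (by nlinarith)
    have e3 : A2/((n:ℝ)+1) + B2/((n:ℝ)+1) = S/((n:ℝ)+1) := by
      rw [hS]; ring
    rw [hJ'def]; linarith
  have hI'le : I' ≤ I := by rw [hI'def]; linarith
  have hUnum : 0 ≤ ((n:ℝ)+3)*J' - 2*I' := by
    have k1 : ((n:ℝ)+3)*(J - S/((n:ℝ)+1)) ≤ ((n:ℝ)+3)*J' :=
      mul_le_mul_of_nonneg_left hJ'ge h3p.le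
    have k2 : ((n:ℝ)+3)*(S/((n:ℝ)+1)) ≤ 2*S := aux_k2 n S hn2 hqpos hqS
    have k3 : ((n:ℝ)+3)*(J - S/((n:ℝ)+1))
        = ((n:ℝ)*J + 3*J) - ((n:ℝ)+3)*(S/((n:ℝ)+1)) := by ring
    linarith [hnJ, hJpos, hI'le, hIpos]
  have hVnum : 0 ≤ ((n:ℝ)+1)*I' - ((n:ℝ)+3)*J' := by
    have hI'eq : ((n:ℝ)+1)*I' = ((n:ℝ)+1)*I - S := by
      rw [hI'def]; linear_combination -hqS
    have m1 : ((n:ℝ)+3)*J' ≤ ((n:ℝ)+3)*J := mul_le_mul_of_nonneg_left hJ'le h3p.le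
    have ea : ((n:ℝ)+3)*J = (n:ℝ)*J + 3*J := by ring
    have eb : ((n:ℝ)+1)*I = (n:ℝ)*I + I := by ring
    have ec : (n:ℝ)*(I-J) = (n:ℝ)*I - (n:ℝ)*J := by ring
    linarith [hnK, hKpos]
  obtain ⟨U, hUdef⟩ : ∃ x : ℝ, x = (((n:ℝ)+3)*J' - 2*I')/((n:ℝ)-1) := ⟨_, rfl⟩
  obtain ⟨V, hVdef⟩ : ∃ x : ℝ, x = (((n:ℝ)+1)*I' - ((n:ℝ)+3)*J')/((n:ℝ)-1) := ⟨_, rfl⟩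
  have hUpos : 0 ≤ U := hUdef ▸ div_nonneg hUnum hnm.le
  have hVpos : 0 ≤ V := hVdef ▸ div_nonneg hVnum hnm.le
  obtain ⟨Cc, hCcdef⟩ : ∃ x : ℝ, x = ((n:ℝ)+1)*((n:ℝ)+2)*U := ⟨_, rfl⟩
  obtain ⟨Dc, hDcdef⟩ : ∃ x : ℝ, x = ((n:ℝ)+1)*((n:ℝ)+2)*V := ⟨_, rfl⟩
  have hCpos : 0 ≤ Cc := hCcdef ▸ mul_nonneg (by positivity) hUpos
  have hDpos : 0 ≤ Dc := hDcdef ▸ mul_nonneg (by positivity) hVpos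
  set σ : ℝ → ℝ := fun x => ff0 n a0 A1 A2 B2 Cc Dc ((x - α)/L) with hσdef
  set σ1 : ℝ → ℝ := fun x => ff1 n A1 A2 B2 Cc Dc ((x - α)/L) * (1/L) with hσ1def
  set σ2 : ℝ → ℝ := fun x => ff2 n A2 B2 Cc Dc ((x - α)/L) * (1/L) * (1/L) with hσ2def
  have hinner : ∀ x : ℝ, HasDerivAt (fun x : ℝ => (x - α)/L) (1/L) x := by
    intro x
    simpa using ((hasDerivAt_id x).sub_const α).div_const L
  have hder1 : ∀ x, HasDerivAt σ (σ1 x) x := by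
    intro x
    exact (hasDerivAt_ff0 n a0 A1 A2 B2 Cc Dc ((x-α)/L)).comp x (hinner x)
  have hder2 : ∀ x, HasDerivAt σ1 (σ2 x) x := by
    intro x
    exact ((hasDerivAt_ff1 n A1 A2 B2 Cc Dc ((x-α)/L)).comp x (hinner x)).mul_const (1/L)
  have hd1 : deriv σ = σ1 := funext fun x => (hder1 x).deriv
  have hd2 : deriv (deriv σ) = σ2 := by
    rw [hd1]; exact funext fun x => (hder2 x).deriv
  have hu0 : (α - α)/L = 0 := by simp
  have hu1 : (β - α)/L = 1 := by rw [← hLdef]; exact div_self hLne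
  have hcd : ContDiff ℝ 2 σ := by
    rw [hσdef]; unfold ff0
    fun_prop (disch := intros; first | assumption | positivity)
  -- endpoint values
  have hva : σ α = a0 := by rw [hσdef]; simp only [hu0]; exact ff0_eval0 _ _ _ _ _ _ _
  have hvb : σ β = b0 := by
    have hgoal : Cc/(((n:ℝ)+2)*((n:ℝ)+3)) + 2*Dc/(((n:ℝ)+1)*((n:ℝ)+2)*((n:ℝ)+3)) = J' := by
      rw [hCcdef, hDcdef, hUdef, hVdef]
      field_simp
      ring
    rw [hσdef]; simp only [hu1]
    rw [ff0_eval1]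
    have hJ'eq : A2/((n:ℝ)+2) + B2/(((n:ℝ)+1)*((n:ℝ)+2)) = J - J' := by
      rw [hJ'def]; ring
    have hJval : J = b0 - a0 - A1 := hJdef
    linarith
  have hda : deriv σ α = a1 := by
    rw [hd1, hσ1def]
    simp only [hu0]
    rw [ff1_eval0, hA1]
    field_simp
  have hdb : deriv σ β = b1 := by
    rw [hd1, hσ1def]
    simp only [hu1]
    have h2goal : (Cc+Dc)/(((n:ℝ)+1)*((n:ℝ)+2)) = I' := by
      rw [hCcdef, hDcdef, hUdef, hVdef]
      field_simp
      ring
    rw [ff1_eval1, h2goal]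
    have heq : A1 + (A2+B2)/((n:ℝ)+1) + I' = b1 * L := by
      rw [hI'def, hS, hIdef, hA1]
      field_simp
      ring
    rw [heq]
    field_simp
  have hLL : L * (1/L) = 1 := by field_simp
  have hdda : deriv (deriv σ) α = a2 := by
    rw [hd2, hσ2def]
    simp only [hu0]
    rw [ff2_eval0 n hn0, hA2]
    calc a2 * L^2 * (1/L) * (1/L) = a2 * ((L*(1/L)) * (L*(1/L))) := by ring
      _ = a2 := by rw [hLL]; ring
  have hddb : deriv (deriv σ) β = b2 := by
    rw [hd2, hσ2def]
    simp only [hu1]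
    rw [ff2_eval1 n hn0, hB2]
    calc b2 * L^2 * (1/L) * (1/L) = b2 * ((L*(1/L)) * (L*(1/L))) := by ring
      _ = b2 := by rw [hLL]; ring
  -- monotonicity and range
  have hderiv_nonneg : ∀ x ∈ Set.Icc α β, 0 ≤ deriv σ x := by
    intro x hx
    rw [hd1, hσ1def]
    have ht0 : 0 ≤ (x - α)/L := div_nonneg (by linarith [hx.1]) hL.le
    have ht1 : (x - α)/L ≤ 1 := by
      rw [div_le_one hL, hLdef]; linarith [hx.2]
    have hlb := ff1_lower n A1 A2 B2 Cc Dc hA2pos.le hB2pos.le hCpos hDpos _ ht0 ht1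
    exact mul_nonneg (le_trans hA1pos.le hlb) (by positivity)
  have hmono : MonotoneOn σ (Set.Icc α β) := by
    apply monotoneOn_of_deriv_nonneg (convex_Icc α β) hcd.continuous.continuousOn
    · intro x hx
      exact ((hder1 x).differentiableAt).differentiableWithinAt
    · intro x hx
      rw [interior_Icc] at hx
      exact hderiv_nonneg x ⟨hx.1.le, hx.2.le⟩
  have hmemαβ : α ∈ Set.Icc α β := left_mem_Icc.2 hαβ.le
  have hmemβ : β ∈ Set.Icc α β := right_mem_Icc.2 hαβ.le
  refine ⟨Set.univ, σ, isOpen_univ, subset_univ _, hcd.contDiffOn, ?_, hva, hda, hdda, hvb, hdb, hddb, ?_⟩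
  · intro x hx
    constructor
    · rw [← hva]; exact hmono hmemαβ hx hx.1
    · rw [← hvb]; exact hmono hx hmemβ hx.2
  · intro x hx
    rw [hd2, hσ2def]
    have ht0 : 0 < (x - α)/L := div_pos (by linarith [hx.1]) hL
    have ht1 : (x - α)/L < 1 := by
      rw [div_lt_one hL, hLdef]; linarith [hx.2]
    have hf2 := ff2_pos n A2 B2 Cc Dc hA2pos hB2pos hCpos hDpos _ ht0 ht1
    positivity
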